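/- Each φ_i maps X_fin into X_fin, and for all s,t ∈ X_fin the limit K_∞(s,t) := lim_{n→∞} K_n(s,t) exists and defines a kernel on X_fin such that: (i) K_∞ is positive definite on X_fin; (ii) (LK_∞)(s,t) = ∑_{i=1}^m K_∞(φ_i(s),φ_i(t)) = K_∞(s,t) for all s,t ∈ X_fin; (iii) K_∞ − K is positive definite on X_fin. -/

import Mathlib

open Filter Topology
open scoped BigOperators ComplexOrder ENNReal

/-- A kernel `J : X × X → ℂ` is positive definite: every finite Gram sum
`∑ conj (c α) * c β * J (s α) (s β)` is a nonnegative real number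
(using the partial order on `ℂ`). -/
def IsPD {X : Type*} (J : X → X → ℂ) : Prop :=
  ∀ (r : ℕ) (c : Fin r → ℂ) (p : Fin r → X),
    0 ≤ ∑ α, ∑ β, (starRingEnd ℂ) (c α) * c β * J (p α) (p β)

/-- The pullback operator `(LJ)(s,t) = ∑ i, J (φ i s) (φ i t)`. -/
noncomputable def pullback {X : Type*} (m : ℕ) (φ : Fin m → X → X) (J : X → X → ℂ) :
    X → X → ℂ :=
  fun s t => ∑ i, J (φ i s) (φ i t)

/-- For a word `w = i₁⋯iₙ ∈ {1,…,m}ⁿ`, `phiW φ w = φ_{iₙ} ∘ ⋯ ∘ φ_{i₁}`. -/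
def phiW {X : Type*} {m : ℕ} (φ : Fin m → X → X) : {n : ℕ} → (Fin n → Fin m) → X → X
  | 0, _, x => x
  | n + 1, w, x => φ (w (Fin.last n)) (phiW φ (fun i => w i.castSucc) x)

/-- The tower `K₀ = K`, `K_{n+1} = L Kₙ`. -/
noncomputable def tower {X : Type*} (m : ℕ) (φ : Fin m → X → X) (K : X → X → ℂ) :
    ℕ → X → X → ℂ
  | 0 => K
  | n + 1 => pullback m φ (tower m φ K n)

/-- The diagonal `uₙ(s) = Kₙ(s,s)` (a real number, as `Kₙ` is p.d.). -/
noncomputable def diag {X : Type*} (m : ℕ) (φ : Fin m → X → X) (K : X → X → ℂ)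
    (n : ℕ) (s : X) : ℝ :=
  (tower m φ K n s s).re

/-- The diagonal increment `a_s(w) = u_{|w|+1}(φ_w s) − u_{|w|}(φ_w s)`. -/
noncomputable def incr {X : Type*} (m : ℕ) (φ : Fin m → X → X) (K : X → X → ℂ)
    (s : X) {k : ℕ} (w : Fin k → Fin m) : ℝ :=
  diag m φ K (k + 1) (phiW φ w s) - diag m φ K k (phiW φ w s)

/-- The finiteness locus `X_fin = {s : u_∞(s) = lim uₙ(s) < ∞}` (the monotone
sequence `uₙ(s)` has a finite limit). -/
def Xfin {X : Type*} (m : ℕ) (φ : Fin m → X → X) (K : X → X → ℂ) : Set X :=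
  {s | ∃ l : ℝ, Filter.Tendsto (fun n => diag m φ K n s) Filter.atTop (nhds l)}

/-- Positive definiteness of a kernel restricted to a subset `Y ⊆ X`. -/
def IsPDOn {X : Type*} (Y : Set X) (J : X → X → ℂ) : Prop :=
  ∀ (r : ℕ) (c : Fin r → ℂ) (p : Fin r → X), (∀ α, p α ∈ Y) →
    0 ≤ ∑ α, ∑ β, (starRingEnd ℂ) (c α) * c β * J (p α) (p β)

section helpers
variable {X : Type*}

private lemma isPD_add {A B : X → X → ℂ} (hA : IsPD A) (hB : IsPD B) :
    IsPD (fun s t => A s t + B s t) := by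
  intro r c p
  have h := add_nonneg (hA r c p) (hB r c p)
  simpa [mul_add, Finset.sum_add_distrib] using h

private lemma isPD_pullback {m : ℕ} {φ : Fin m → X → X} {J : X → X → ℂ} (hJ : IsPD J) :
    IsPD (pullback m φ J) := by
  intro r c p
  have h : ∑ α, ∑ β, (starRingEnd ℂ) (c α) * c β * pullback m φ J (p α) (p β)
      = ∑ i : Fin m, ∑ α, ∑ β, (starRingEnd ℂ) (c α) * c β * J (φ i (p α)) (φ i (p β)) := by
    simp only [pullback, Finset.mul_sum]
    calc ∑ α, ∑ β, ∑ i : Fin m, (starRingEnd ℂ) (c α) * c β * J (φ i (p α)) (φ i (p β))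
        = ∑ α, ∑ i : Fin m, ∑ β, (starRingEnd ℂ) (c α) * c β * J (φ i (p α)) (φ i (p β)) :=
          Finset.sum_congr rfl fun α _ => Finset.sum_comm
      _ = ∑ i : Fin m, ∑ α, ∑ β, (starRingEnd ℂ) (c α) * c β * J (φ i (p α)) (φ i (p β)) :=
          Finset.sum_comm
  rw [h]
  exact Finset.sum_nonneg fun i _ => hJ r c (fun α => φ i (p α))

private lemma isPD_pullback_sub {m : ℕ} {φ : Fin m → X → X} {A B : X → X → ℂ}
    (h : IsPD (fun s t => A s t - B s t)) :
    IsPD (fun s t => pullback m φ A s t - pullback m φ B s t) := by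
  have h1 := isPD_pullback (φ := φ) h
  intro r c p
  have h2 := h1 r c p
  simp only [pullback, Finset.sum_sub_distrib, mul_sub] at h2 ⊢
  exact h2

variable {m : ℕ} {φ : Fin m → X → X} {K : X → X → ℂ}

private lemma tower_pd (hK : IsPD K) : ∀ n, IsPD (tower m φ K n)
  | 0 => hK
  | n + 1 => isPD_pullback (tower_pd hK n)

private lemma tower_step_pd (hsub : IsPD fun s t => pullback m φ K s t - K s t) :
    ∀ n, IsPD fun s t => tower m φ K (n+1) s t - tower m φ K n s t
  | 0 => hsub
  | n + 1 => isPD_pullback_sub (tower_step_pd hsub n)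

private lemma tower_gap_pd (hsub : IsPD fun s t => pullback m φ K s t - K s t)
    {k n : ℕ} (h : k ≤ n) :
    IsPD fun s t => tower m φ K n s t - tower m φ K k s t := by
  induction n, h using Nat.le_induction with
  | base => intro r c p; simp
  | succ n hkn ih =>
      have heq : ∀ s t : X, tower m φ K (n+1) s t - tower m φ K k s t
          = (tower m φ K (n+1) s t - tower m φ K n s t)
            + (tower m φ K n s t - tower m φ K k s t) := fun s t => by ring
      intro r c p
      have h2 := isPD_add (tower_step_pd hsub n) ih r c p
      simp only [heq]
      exact h2

end helpers

section pdfacts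
variable {X : Type*} {J : X → X → ℂ}

private lemma pd_self (hJ : IsPD J) (s : X) : 0 ≤ J s s := by
  have h := hJ 1 (fun _ => 1) (fun _ => s)
  simpa using h

private lemma pd_diag_im (hJ : IsPD J) (s : X) : (J s s).im = 0 := by
  have h := (Complex.le_def.mp (pd_self hJ s)).2
  simpa using h.symm

private lemma pd_diag_re (hJ : IsPD J) (s : X) : 0 ≤ (J s s).re := by
  have h := (Complex.le_def.mp (pd_self hJ s)).1
  simpa using h

private lemma pd_herm (hJ : IsPD J) (s t : X) : J t s = (starRingEnd ℂ) (J s t) := by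
  have h1 := hJ 2 ![1, 1] ![s, t]
  have h2 := hJ 2 ![1, Complex.I] ![s, t]
  simp [Fin.sum_univ_two] at h1 h2
  have e1 := (Complex.le_def.mp h1).2
  have e2 := (Complex.le_def.mp h2).2
  have hs := pd_diag_im hJ s
  have ht := pd_diag_im hJ t
  simp [Complex.add_im, Complex.sub_im, Complex.mul_im, Complex.I_re, Complex.I_im,
    hs, ht] at e1 e2
  apply Complex.ext
  · simp only [Complex.conj_re]; linarith
  · simp only [Complex.conj_im]; linarith

private lemma pd_cs (hJ : IsPD J) (s t : X) :
    Complex.normSq (J s t) ≤ (J s s).re * (J t t).re := by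
  have herm := pd_herm hJ s t
  have ha := pd_diag_re hJ s
  have hb := pd_diag_re hJ t
  have key : ∀ l : ℝ, 0 ≤ (Complex.normSq (J s t) * (J t t).re) * (l * l)
      + (2 * Complex.normSq (J s t)) * l + (J s s).re := by
    intro l
    have h := hJ 2 ![1, (l : ℂ) * (starRingEnd ℂ) (J s t)] ![s, t]
    simp only [Fin.sum_univ_two, Matrix.cons_val_zero, Matrix.cons_val_one, Matrix.head_cons,
      map_one, one_mul, mul_one, map_mul, Complex.conj_conj, Complex.conj_ofReal] at h
    have hsum : J s s + (↑l * (starRingEnd ℂ) (J s t)) * J s t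
        + (↑l * J s t * J t s + (↑l * J s t) * (↑l * (starRingEnd ℂ) (J s t)) * J t t)
        = J s s + (↑(l * Complex.normSq (J s t)) : ℂ)
          + (↑(l * Complex.normSq (J s t)) : ℂ)
          + (↑(l ^ 2 * Complex.normSq (J s t)) : ℂ) * J t t := by
      rw [herm]
      push_cast
      rw [← Complex.mul_conj]
      ring
    rw [hsum] at h
    have hre := (Complex.le_def.mp h).1
    simp only [Complex.zero_re, Complex.add_re, Complex.ofReal_re, Complex.re_ofReal_mul] at hre
    nlinarith [hre]
  have hd := discrim_le_zero key
  rw [discrim] at hd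
  rcases (show (0:ℝ) ≤ Complex.normSq (J s t) from Complex.normSq_nonneg (J s t)).eq_or_lt with h0 | h0
  · rw [← h0]; exact mul_nonneg ha hb
  · nlinarith [hd, h0]

end pdfacts

section diagfacts
variable {X : Type*} {m : ℕ} {φ : Fin m → X → X} {K : X → X → ℂ}

private lemma diag_nonneg (hK : IsPD K) (n : ℕ) (s : X) : 0 ≤ diag m φ K n s :=
  pd_diag_re (tower_pd hK n) s

private lemma diag_mono (hsub : IsPD fun s t => pullback m φ K s t - K s t) (s : X) :
    Monotone fun n => diag m φ K n s := by
  apply monotone_nat_of_le_succ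
  intro n
  have h := pd_diag_re (tower_step_pd hsub n) s
  simp only [Complex.sub_re] at h
  simp only [diag]
  linarith

private lemma diag_succ (n : ℕ) (s : X) :
    diag m φ K (n + 1) s = ∑ i, diag m φ K n (φ i s) := by
  simp [diag, tower, pullback, Complex.re_sum]

end diagfacts

/-- Invariant completion: each `φᵢ` maps `X_fin` into itself, and the pointwise limit
`K_∞` exists on `X_fin × X_fin`, is positive definite there, satisfies `L K_∞ = K_∞`
on `X_fin`, and majorizes `K` on `X_fin`. -/
theorem stmt7 {X : Type*} (m : ℕ) (hm : 1 ≤ m) (φ : Fin m → X → X)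
    (K : X → X → ℂ) (hK : IsPD K)
    (hsub : IsPD (fun s t => pullback m φ K s t - K s t)) :
    (∀ i : Fin m, ∀ s ∈ Xfin m φ K, φ i s ∈ Xfin m φ K) ∧
    ∃ Kinf : X → X → ℂ,
      (∀ s ∈ Xfin m φ K, ∀ t ∈ Xfin m φ K,
        Tendsto (fun n => tower m φ K n s t) atTop (𝓝 (Kinf s t))) ∧
      IsPDOn (Xfin m φ K) Kinf ∧
      (∀ s ∈ Xfin m φ K, ∀ t ∈ Xfin m φ K,
        ∑ i : Fin m, Kinf (φ i s) (φ i t) = Kinf s t) ∧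
      IsPDOn (Xfin m φ K) (fun s t => Kinf s t - K s t) := by
  have hmono : ∀ s : X, Monotone fun n => diag m φ K n s := diag_mono hsub
  have hle : ∀ (s : X) (l : ℝ), Tendsto (fun n => diag m φ K n s) atTop (𝓝 l) →
      ∀ n, diag m φ K n s ≤ l := fun s l h n => (hmono s).ge_of_tendsto h n
  -- part 1: φ i maps Xfin into Xfin
  have hphi : ∀ i : Fin m, ∀ s ∈ Xfin m φ K, φ i s ∈ Xfin m φ K := by
    rintro i s ⟨l, hl⟩
    have hb : ∀ n, diag m φ K n (φ i s) ≤ l := by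
      intro n
      have h1 : diag m φ K n (φ i s) ≤ ∑ j, diag m φ K n (φ j s) :=
        Finset.single_le_sum (fun j _ => diag_nonneg hK n (φ j s)) (Finset.mem_univ i)
      rw [← diag_succ] at h1
      exact h1.trans (hle s l hl (n + 1))
    exact ⟨_, tendsto_atTop_ciSup (hmono (φ i s)) ⟨l, by rintro x ⟨n, rfl⟩; exact hb n⟩⟩
  -- Cauchy
  have hcauchy : ∀ s ∈ Xfin m φ K, ∀ t ∈ Xfin m φ K,
      CauchySeq fun n => tower m φ K n s t := by
    rintro s ⟨a, ha⟩ t ⟨b, hb⟩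
    rw [Metric.cauchySeq_iff']
    intro ε hε
    have h1 : ∀ᶠ n in atTop, a - ε < diag m φ K n s :=
      ha.eventually (eventually_gt_nhds (by linarith))
    have h2 : ∀ᶠ n in atTop, b - ε < diag m φ K n t :=
      hb.eventually (eventually_gt_nhds (by linarith))
    obtain ⟨N, hN1, hN2⟩ := (h1.and h2).exists
    refine ⟨N, fun n hn => ?_⟩
    have hgap := tower_gap_pd hsub hn
    have hcs := pd_cs hgap s t
    have hgs0 : 0 ≤ diag m φ K n s - diag m φ K N s := by
      have := hmono s hn; simp only at this; linarith
    have hgt0 : 0 ≤ diag m φ K n t - diag m φ K N t := by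
      have := hmono t hn; simp only at this; linarith
    have hgsε : diag m φ K n s - diag m φ K N s < ε := by
      have := hle s a ha n; linarith
    have hgtε : diag m φ K n t - diag m φ K N t < ε := by
      have := hle t b hb n; linarith
    have hds : (tower m φ K n s s - tower m φ K N s s).re
        = diag m φ K n s - diag m φ K N s := by simp [diag, Complex.sub_re]
    have hdt : (tower m φ K n t t - tower m φ K N t t).re
        = diag m φ K n t - diag m φ K N t := by simp [diag, Complex.sub_re]
    rw [hds, hdt] at hcs
    rw [dist_eq_norm]
    have hnormsq : ‖tower m φ K n s t - tower m φ K N s t‖ ^ 2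
        = Complex.normSq (tower m φ K n s t - tower m φ K N s t) := by
      rw [← Complex.sq_norm]
    have hlt : ‖tower m φ K n s t - tower m φ K N s t‖ ^ 2 < ε ^ 2 := by
      rw [hnormsq]
      nlinarith [hcs, hgs0, hgt0, hgsε, hgtε]
    exact lt_of_pow_lt_pow_left₀ 2 hε.le hlt
  -- the limit kernel
  set Kinf : X → X → ℂ := fun s t => limUnder atTop (fun n => tower m φ K n s t) with hKinf
  have htend : ∀ s ∈ Xfin m φ K, ∀ t ∈ Xfin m φ K,
      Tendsto (fun n => tower m φ K n s t) atTop (𝓝 (Kinf s t)) := fun s hs t ht =>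
    (hcauchy s hs t ht).tendsto_limUnder
  have hlim_nonneg : ∀ (f : ℕ → ℂ) (z : ℂ), (∀ n, 0 ≤ f n) →
      Tendsto f atTop (𝓝 z) → 0 ≤ z := by
    intro f z hf hz
    rw [Complex.le_def]
    have hre : Tendsto (fun n => (f n).re) atTop (𝓝 z.re) :=
      (Complex.continuous_re.tendsto z).comp hz
    have him : Tendsto (fun n => (f n).im) atTop (𝓝 z.im) :=
      (Complex.continuous_im.tendsto z).comp hz
    constructor
    · simp only [Complex.zero_re]
      refine le_of_tendsto_of_tendsto' tendsto_const_nhds hre fun n => ?_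
      simpa using (Complex.le_def.mp (hf n)).1
    · have h0 : (fun n => (f n).im) = fun _ => (0 : ℝ) := by
        funext n; simpa using ((Complex.le_def.mp (hf n)).2).symm
      rw [h0] at him
      simpa using (tendsto_nhds_unique him tendsto_const_nhds).symm
  refine ⟨hphi, Kinf, htend, ?_, ?_, ?_⟩
  · intro r c p hp
    have hg : Tendsto (fun n => ∑ α, ∑ β, (starRingEnd ℂ) (c α) * c β * tower m φ K n (p α) (p β))
        atTop (𝓝 (∑ α, ∑ β, (starRingEnd ℂ) (c α) * c β * Kinf (p α) (p β))) := by
      refine tendsto_finset_sum _ fun α _ => tendsto_finset_sum _ fun β _ => ?_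
      exact (htend _ (hp α) _ (hp β)).const_mul _
    exact hlim_nonneg _ _ (fun n => tower_pd hK n r c p) hg
  · intro s hs t ht
    have h1 : Tendsto (fun n => ∑ i : Fin m, tower m φ K n (φ i s) (φ i t)) atTop
        (𝓝 (∑ i : Fin m, Kinf (φ i s) (φ i t))) :=
      tendsto_finset_sum _ fun i _ => htend _ (hphi i s hs) _ (hphi i t ht)
    have h2 : Tendsto (fun n => tower m φ K (n + 1) s t) atTop (𝓝 (Kinf s t)) :=
      (htend s hs t ht).comp (tendsto_add_atTop_nat 1)
    have h3 : (fun n => ∑ i : Fin m, tower m φ K n (φ i s) (φ i t))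
        = fun n => tower m φ K (n + 1) s t := by funext n; simp [tower, pullback]
    rw [h3] at h1
    exact tendsto_nhds_unique h1 h2
  · intro r c p hp
    have hg : Tendsto (fun n => ∑ α, ∑ β, (starRingEnd ℂ) (c α) * c β *
        (tower m φ K n (p α) (p β) - K (p α) (p β))) atTop
        (𝓝 (∑ α, ∑ β, (starRingEnd ℂ) (c α) * c β * (Kinf (p α) (p β) - K (p α) (p β)))) := by
      refine tendsto_finset_sum _ fun α _ => tendsto_finset_sum _ fun β _ => ?_
      exact (((htend _ (hp α) _ (hp β)).sub tendsto_const_nhds).const_mul _)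
    refine hlim_nonneg _ _ (fun n => ?_) hg
    have h4 := tower_gap_pd hsub (Nat.zero_le n) r c p
    simpa [tower] using h4
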